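/- Symplectic case: with N = 2n, κ = N/2 + 1 and R(u) = 1 − P/u + Q/(u−κ), the operator R(1) satisfies ((1 − P)/2)·R(1) = R(1) and R(1)·((1 − P)/2) = R(1). -/

import Mathlib

open Matrix

def flipP (N : ℕ) : Matrix (Fin N × Fin N) (Fin N × Fin N) ℂ :=
  Matrix.of fun p q => if p.1 = q.2 ∧ p.2 = q.1 then 1 else 0

def epsSymp (n : ℕ) (i : Fin (2 * n)) : ℂ := if (i : ℕ) < n then 1 else -1

def QSymp (n : ℕ) : Matrix (Fin (2 * n) × Fin (2 * n)) (Fin (2 * n) × Fin (2 * n)) ℂ :=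
  Matrix.of fun p q =>
    if p.2 = p.1.rev ∧ q.2 = q.1.rev then epsSymp n p.1 * epsSymp n q.1 else 0

/-- `κ = N/2 + 1 = n + 1` in the symplectic case, `N = 2n`. -/
noncomputable def kSymp (n : ℕ) : ℂ := (n : ℂ) + 1

/-- `R(1) = 1 - P + Q/(1 - κ)` in the symplectic case. -/
noncomputable def R1Symp (n : ℕ) : Matrix (Fin (2 * n) × Fin (2 * n)) (Fin (2 * n) × Fin (2 * n)) ℂ :=
  1 - flipP (2 * n) + (1 - kSymp n)⁻¹ • QSymp n

lemma flipP_mul {N : ℕ} (M : Matrix (Fin N × Fin N) (Fin N × Fin N) ℂ) :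
    flipP N * M = Matrix.of fun p q => M (p.2, p.1) q := by
  ext ⟨a, b⟩ ⟨c, d⟩
  simp only [Matrix.mul_apply, flipP, Matrix.of_apply, ite_and, Fintype.sum_prod_type,
    ite_mul, one_mul, zero_mul]
  rw [Finset.sum_eq_single b]
  · simp
  · intro x _ hx; simp [hx.symm]
  · simp

lemma mul_flipP {N : ℕ} (M : Matrix (Fin N × Fin N) (Fin N × Fin N) ℂ) :
    M * flipP N = Matrix.of fun p q => M p (q.2, q.1) := by
  ext ⟨a, b⟩ ⟨c, d⟩
  simp only [Matrix.mul_apply, flipP, Matrix.of_apply, ite_and, Fintype.sum_prod_type,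
    mul_ite, mul_one, mul_zero]
  rw [Finset.sum_eq_single d]
  · simp
  · intro x _ hx; simp [hx]
  · simp

lemma eps_rev (n : ℕ) (i : Fin (2 * n)) : epsSymp n i.rev = - epsSymp n i := by
  have := i.isLt
  simp only [epsSymp, Fin.val_rev]
  rcases lt_or_ge (i : ℕ) n with h | h
  · rw [if_neg (by omega), if_pos h]; try norm_num
  · rw [if_pos (by omega), if_neg (by omega)]; try norm_num

lemma rev_eq_iff {N : ℕ} (i j : Fin N) : i = j.rev ↔ j = i.rev := by
  constructor <;> (rintro rfl; simp)

lemma flipP_sq {N : ℕ} : flipP N * flipP N = 1 := by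
  rw [flipP_mul]
  ext ⟨a, b⟩ ⟨c, d⟩
  simp only [flipP, Matrix.of_apply, Matrix.one_apply, Prod.mk.injEq]
  aesop

lemma flipP_Q (n : ℕ) : flipP (2 * n) * QSymp n = - QSymp n := by
  rw [flipP_mul]
  ext ⟨a, b⟩ ⟨c, d⟩
  simp only [QSymp, Matrix.of_apply, Matrix.neg_apply]
  split_ifs with h h' h'
  · obtain ⟨h1, -⟩ := h
    rw [(rev_eq_iff a b).mp h1, eps_rev]; ring
  · exact absurd ⟨(rev_eq_iff a b).mp h.1, h.2⟩ h'
  · exact absurd ⟨(rev_eq_iff b a).mp h'.1, h'.2⟩ h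
  · ring

lemma Q_flipP (n : ℕ) : QSymp n * flipP (2 * n) = - QSymp n := by
  rw [mul_flipP]
  ext ⟨a, b⟩ ⟨c, d⟩
  simp only [QSymp, Matrix.of_apply, Matrix.neg_apply]
  split_ifs with h h' h'
  · obtain ⟨-, h2⟩ := h
    rw [(rev_eq_iff c d).mp h2, eps_rev]; ring
  · exact absurd ⟨h.1, (rev_eq_iff c d).mp h.2⟩ h'
  · exact absurd ⟨h'.1, (rev_eq_iff d c).mp h'.2⟩ h
  · ring

/-- `R(1)` is unchanged under left or right multiplication by `(1-P)/2`. -/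
theorem R1Symp_projector (n : ℕ) (hn : 0 < n) :
    ((2 : ℂ)⁻¹ • (1 - flipP (2 * n))) * R1Symp n = R1Symp n ∧
    R1Symp n * ((2 : ℂ)⁻¹ • (1 - flipP (2 * n))) = R1Symp n := by
  set c : ℂ := (1 - kSymp n)⁻¹
  constructor
  · rw [R1Symp, smul_mul_assoc]
    rw [show (1 - flipP (2*n)) * (1 - flipP (2*n) + c • QSymp n)
        = (2:ℂ) • (1 - flipP (2*n) + c • QSymp n) by
      simp only [mul_add, mul_sub, sub_mul, mul_smul_comm, flipP_sq, flipP_Q,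
        Matrix.one_mul, Matrix.mul_one]
      module]
    rw [smul_smul]; try norm_num
    rfl
  · rw [R1Symp, mul_smul_comm]
    rw [show (1 - flipP (2*n) + c • QSymp n) * (1 - flipP (2*n))
        = (2:ℂ) • (1 - flipP (2*n) + c • QSymp n) by
      simp only [mul_sub, sub_mul, add_mul, smul_mul_assoc, flipP_sq, Q_flipP,
        Matrix.one_mul, Matrix.mul_one]
      module]
    rw [smul_smul]; try norm_num
    rfl
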